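/- For an equilateral triangle with side length l, the maximum over points p in the (closed) triangle of the product of the distances from p to the three vertices equals (√3/8)·l³, and it is attained at the midpoint of each side. -/

import Mathlib

open Real

private lemma aux17 (q r : ℝ) (hq0 : 0 ≤ q) (hr0 : 0 ≤ r) (hq3 : q ≤ 1/3)
    (hschur : 4*q ≤ 1 + 9*r) : q^2 - q^3 - r ≤ 3/64 := by
  rcases le_total q (1/4) with hq4 | hq4
  · nlinarith [mul_nonneg (mul_nonneg hq0 hq0) (sub_nonneg.2 hq4), sq_nonneg (q - 1/4)]
  · nlinarith [sq_nonneg (q - 1/4), mul_nonneg (sub_nonneg.2 hq4) (sub_nonneg.2 hq3)]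

private lemma key17' (a b c : ℝ) (hc : 0 ≤ c) (hcb : c ≤ b) (hba : b ≤ a)
    (h : a + b + c = 1) :
    (a^2+a*b+b^2)*(b^2+b*c+c^2)*(c^2+c*a+a^2) ≤ 3/64 := by
  have hb : 0 ≤ b := hc.trans hcb
  have ha : 0 ≤ a := hb.trans hba
  have hid : (a^2+a*b+b^2)*(b^2+b*c+c^2)*(c^2+c*a+a^2)
      = (a*b+b*c+c*a)^2*(a+b+c)^2 - (a*b+b*c+c*a)^3 - (a*b*c)*(a+b+c)^3 := by ring
  rw [hid, h]
  have hq3 : a*b+b*c+c*a ≤ 1/3 := by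
    nlinarith [sq_nonneg (a-b), sq_nonneg (b-c), sq_nonneg (a-c)]
  have hq0 : 0 ≤ a*b+b*c+c*a := by positivity
  have hr0 : 0 ≤ a*b*c := by positivity
  have hschur : 4*(a*b+b*c+c*a) ≤ 1 + 9*(a*b*c) := by
    have h2 : 0 ≤ c*(a-c)*(b-c) :=
      mul_nonneg (mul_nonneg hc (by linarith)) (by linarith)
    have h1 : 0 ≤ (a-b)^2*(a+b-c) := mul_nonneg (sq_nonneg _) (by linarith)
    have hex : (a+b+c)^3 + 9*(a*b*c) - 4*(a+b+c)*(a*b+b*c+c*a)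
        = (a-b)^2*(a+b-c) + c*(a-c)*(b-c) := by ring
    rw [h] at hex; linarith
  have := aux17 (a*b+b*c+c*a) (a*b*c) hq0 hr0 hq3 hschur
  nlinarith [this]

private lemma key17 (a b c : ℝ) (ha : 0 ≤ a) (hb : 0 ≤ b) (hc : 0 ≤ c)
    (h : a + b + c = 1) :
    (a^2+a*b+b^2)*(b^2+b*c+c^2)*(c^2+c*a+a^2) ≤ 3/64 := by
  rcases le_total a b with h1 | h1 <;> rcases le_total b c with h2 | h2 <;>
    rcases le_total a c with h3 | h3
  · calc (a^2+a*b+b^2)*(b^2+b*c+c^2)*(c^2+c*a+a^2)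
        = (c^2+c*b+b^2)*(b^2+b*a+a^2)*(a^2+a*c+c^2) := by ring
      _ ≤ 3/64 := key17' c b a ha h1 h2 (by linarith)
  · calc (a^2+a*b+b^2)*(b^2+b*c+c^2)*(c^2+c*a+a^2)
        = (c^2+c*b+b^2)*(b^2+b*a+a^2)*(a^2+a*c+c^2) := by ring
      _ ≤ 3/64 := key17' c b a ha h1 h2 (by linarith)
  · calc (a^2+a*b+b^2)*(b^2+b*c+c^2)*(c^2+c*a+a^2)
        = (b^2+b*c+c^2)*(c^2+c*a+a^2)*(a^2+a*b+b^2) := by ring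
      _ ≤ 3/64 := key17' b c a ha h3 h2 (by linarith)
  · calc (a^2+a*b+b^2)*(b^2+b*c+c^2)*(c^2+c*a+a^2)
        = (b^2+b*a+a^2)*(a^2+a*c+c^2)*(c^2+c*b+b^2) := by ring
      _ ≤ 3/64 := key17' b a c hc h3 h1 (by linarith)
  · calc (a^2+a*b+b^2)*(b^2+b*c+c^2)*(c^2+c*a+a^2)
        = (c^2+c*a+a^2)*(a^2+a*b+b^2)*(b^2+b*c+c^2) := by ring
      _ ≤ 3/64 := key17' c a b hb h1 h3 (by linarith)
  · calc (a^2+a*b+b^2)*(b^2+b*c+c^2)*(c^2+c*a+a^2)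
        = (a^2+a*c+c^2)*(c^2+c*b+b^2)*(b^2+b*a+a^2) := by ring
      _ ≤ 3/64 := key17' a c b hb h2 h3 (by linarith)
  · calc (a^2+a*b+b^2)*(b^2+b*c+c^2)*(c^2+c*a+a^2)
        = (a^2+a*b+b^2)*(b^2+b*c+c^2)*(c^2+c*a+a^2) := by ring
      _ ≤ 3/64 := key17' a b c hc h2 h1 (by linarith)
  · calc (a^2+a*b+b^2)*(b^2+b*c+c^2)*(c^2+c*a+a^2)
        = (a^2+a*b+b^2)*(b^2+b*c+c^2)*(c^2+c*a+a^2) := by ring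
      _ ≤ 3/64 := key17' a b c hc h2 h1 (by linarith)

private lemma norm_comb17 {E : Type*} [NormedAddCommGroup E] [InnerProductSpace ℝ E]
    (u v : E) (s t : ℝ) :
    ‖s • u + t • v‖^2 = s^2*‖u‖^2 + 2*s*t*(inner ℝ u v : ℝ) + t^2*‖v‖^2 := by
  rw [norm_add_sq_real, norm_smul, norm_smul, real_inner_smul_left, real_inner_smul_right]
  simp [mul_pow, sq_abs]
  ring

private lemma inner_eq17 {E : Type*} [NormedAddCommGroup E] [InnerProductSpace ℝ E]
    {u v : E} {l : ℝ} (hu : ‖u‖ = l) (hv : ‖v‖ = l) (huv : ‖u - v‖ = l) :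
    (inner ℝ u v : ℝ) = l^2/2 := by
  have := norm_sub_sq_real u v
  rw [hu, hv, huv] at this
  linarith

private lemma dist_mid17 {l : ℝ} (hl : 0 ≤ l) (A B C : EuclideanSpace ℝ (Fin 2))
    (hAB : dist A B = l) (hBC : dist B C = l) (hCA : dist C A = l) :
    dist (midpoint ℝ A B) C = Real.sqrt 3 / 2 * l := by
  have hx : ‖A - C‖ = l := by rw [← dist_eq_norm, dist_comm]; exact hCA
  have hy : ‖B - C‖ = l := by rw [← dist_eq_norm]; exact hBC
  have hxy : ‖(A - C) - (B - C)‖ = l := by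
    rw [show (A - C) - (B - C) = A - B by abel, ← dist_eq_norm]; exact hAB
  have hin : (inner ℝ (A - C) (B - C) : ℝ) = l^2/2 := inner_eq17 hx hy hxy
  have hM : midpoint ℝ A B - C = (1/2 : ℝ) • (A - C) + (1/2 : ℝ) • (B - C) := by
    rw [midpoint_eq_smul_add]
    simp [invOf_eq_inv]
    module
  have hsq : dist (midpoint ℝ A B) C ^ 2 = 3/4 * l^2 := by
    rw [dist_eq_norm, hM, norm_comb17, hx, hy, hin]; ring
  have h2 : (Real.sqrt 3 / 2 * l) ^ 2 = 3/4 * l^2 := by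
    rw [mul_pow, div_pow, Real.sq_sqrt (by norm_num : (3:ℝ) ≥ 0)]; ring
  have hnn : 0 ≤ Real.sqrt 3 / 2 * l := by positivity
  nlinarith [dist_nonneg (x := midpoint ℝ A B) (y := C), hsq, h2]

private lemma midprod17 {l : ℝ} (hl : 0 < l) (A B C : EuclideanSpace ℝ (Fin 2))
    (hAB : dist A B = l) (hBC : dist B C = l) (hCA : dist C A = l) :
    dist (midpoint ℝ A B) A * dist (midpoint ℝ A B) B * dist (midpoint ℝ A B) C
      = Real.sqrt 3 / 8 * l ^ 3 := by
  have h1 : dist (midpoint ℝ A B) A = l/2 := by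
    rw [dist_comm, dist_left_midpoint (𝕜 := ℝ), hAB]; norm_num; ring
  have h2 : dist (midpoint ℝ A B) B = l/2 := by
    rw [dist_comm, dist_right_midpoint (𝕜 := ℝ), hAB]; norm_num; ring
  have h3 : dist (midpoint ℝ A B) C = Real.sqrt 3 / 2 * l :=
    dist_mid17 hl.le A B C hAB hBC hCA
  rw [h1, h2, h3]; ring

theorem stmt_17 (l : ℝ) (hl : 0 < l) (A B C : EuclideanSpace ℝ (Fin 2))
    (hAB : dist A B = l) (hBC : dist B C = l) (hCA : dist C A = l) :
    IsGreatest ((fun p => dist p A * dist p B * dist p C) ''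
        (convexHull ℝ {A, B, C})) (Real.sqrt 3 / 8 * l ^ 3) ∧
    (fun p => dist p A * dist p B * dist p C) (midpoint ℝ A B) = Real.sqrt 3 / 8 * l ^ 3 ∧
    (fun p => dist p A * dist p B * dist p C) (midpoint ℝ B C) = Real.sqrt 3 / 8 * l ^ 3 ∧
    (fun p => dist p A * dist p B * dist p C) (midpoint ℝ C A) = Real.sqrt 3 / 8 * l ^ 3 := by
  have hmAB : dist (midpoint ℝ A B) A * dist (midpoint ℝ A B) B * dist (midpoint ℝ A B) C
      = Real.sqrt 3 / 8 * l ^ 3 := midprod17 hl A B C hAB hBC hCA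
  have hmBC : dist (midpoint ℝ B C) B * dist (midpoint ℝ B C) C * dist (midpoint ℝ B C) A
      = Real.sqrt 3 / 8 * l ^ 3 := midprod17 hl B C A hBC hCA hAB
  have hmCA : dist (midpoint ℝ C A) C * dist (midpoint ℝ C A) A * dist (midpoint ℝ C A) B
      = Real.sqrt 3 / 8 * l ^ 3 := midprod17 hl C A B hCA hAB hBC
  refine ⟨⟨⟨midpoint ℝ A B, ?_, by simpa [mul_comm, mul_assoc, mul_left_comm] using hmAB⟩, ?_⟩,
    by simpa using hmAB, by linarith [hmBC], by linarith [hmCA]⟩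
  · exact (convex_convexHull ℝ _).segment_subset
      (subset_convexHull ℝ _ (by simp)) (subset_convexHull ℝ _ (by simp))
      (midpoint_mem_segment A B)
  · rintro x ⟨p, hp, rfl⟩
    -- set up vectors
    have hu : ‖B - A‖ = l := by rw [← dist_eq_norm, dist_comm]; exact hAB
    have hv : ‖C - A‖ = l := by rw [← dist_eq_norm]; exact hCA
    have huv : ‖(B - A) - (C - A)‖ = l := by
      rw [show (B - A) - (C - A) = B - C by abel, ← dist_eq_norm]; exact hBC
    have hin : (inner ℝ (B - A) (C - A) : ℝ) = l^2/2 := inner_eq17 hu hv huv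
    -- decompose p
    rw [convexHull_insert (by simp : ({B, C} : Set (EuclideanSpace ℝ (Fin 2))).Nonempty),
      convexHull_pair] at hp
    obtain ⟨y, hy, hpy⟩ := Set.mem_iUnion₂.1 hp
    obtain ⟨z, hz, hpz⟩ := Set.mem_iUnion₂.1 hpy
    rw [show y = A by simpa using hy] at hpz
    obtain ⟨b, c, hb, hc, hbc, rfl⟩ := hz
    obtain ⟨s, t, hs, ht, hst, rfl⟩ := hpz
    set p := s • A + t • (b • B + c • C) with hpdef
    set β := t * b with hβ
    set γ := t * c with hγ
    have hβ0 : 0 ≤ β := mul_nonneg ht hb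
    have hγ0 : 0 ≤ γ := mul_nonneg ht hc
    have hsum : s + β + γ = 1 := by
      have : β + γ = t := by rw [hβ, hγ, ← mul_add, hbc, mul_one]
      linarith
    have hpA : p - A = β • (B - A) + γ • (C - A) := by
      have hs' : s = 1 - β - γ := by linarith
      rw [hpdef, hs', hβ, hγ]; module
    have hpB : p - B = (β - 1) • (B - A) + γ • (C - A) := by
      have hs' : s = 1 - β - γ := by linarith
      rw [hpdef, hs', hβ, hγ]; module
    have hpC : p - C = β • (B - A) + (γ - 1) • (C - A) := by
      have hs' : s = 1 - β - γ := by linarith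
      rw [hpdef, hs', hβ, hγ]; module
    have hdA : dist p A ^ 2 = l^2 * (β^2 + β*γ + γ^2) := by
      rw [dist_eq_norm, hpA, norm_comb17, hu, hv, hin]; ring
    have hdB : dist p B ^ 2 = l^2 * ((1-β-γ)^2 + (1-β-γ)*γ + γ^2) := by
      rw [dist_eq_norm, hpB, norm_comb17, hu, hv, hin]; ring
    have hdC : dist p C ^ 2 = l^2 * ((1-β-γ)^2 + (1-β-γ)*β + β^2) := by
      rw [dist_eq_norm, hpC, norm_comb17, hu, hv, hin]; ring
    have hα0 : 0 ≤ 1 - β - γ := by linarith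
    have hkey := key17 β γ (1-β-γ) hβ0 hγ0 hα0 (by ring)
    have hsq : (dist p A * dist p B * dist p C)^2 ≤ (Real.sqrt 3 / 8 * l ^ 3)^2 := by
      have hrhs : (Real.sqrt 3 / 8 * l ^ 3)^2 = 3/64 * (l^2)^3 := by
        rw [mul_pow, div_pow, Real.sq_sqrt (by norm_num : (3:ℝ) ≥ 0)]; ring
      have hl2 : (0:ℝ) < l^2 := by positivity
      calc (dist p A * dist p B * dist p C)^2
          = dist p A ^2 * dist p B ^2 * dist p C ^2 := by ring
        _ = (l^2)^3 * ((β^2+β*γ+γ^2) * ((1-β-γ)^2+(1-β-γ)*γ+γ^2)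
              * ((1-β-γ)^2+(1-β-γ)*β+β^2)) := by rw [hdA, hdB, hdC]; ring
        _ ≤ (l^2)^3 * (3/64) := by
            apply mul_le_mul_of_nonneg_left _ (by positivity)
            calc (β^2+β*γ+γ^2) * ((1-β-γ)^2+(1-β-γ)*γ+γ^2) * ((1-β-γ)^2+(1-β-γ)*β+β^2)
                = (β^2+β*γ+γ^2)*(γ^2+γ*(1-β-γ)+(1-β-γ)^2)*((1-β-γ)^2+(1-β-γ)*β+β^2) := by
                  ring
              _ ≤ 3/64 := hkey
        _ = 3/64 * (l^2)^3 := by ring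
        _ = (Real.sqrt 3 / 8 * l ^ 3)^2 := hrhs.symm
    have h1 : 0 ≤ dist p A * dist p B * dist p C := by positivity
    have h2 : 0 ≤ Real.sqrt 3 / 8 * l ^ 3 := by positivity
    exact (pow_le_pow_iff_left₀ h1 h2 two_ne_zero).1 hsq
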